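/- Let α > 1/2 and β ≥ 2α² + α + 1/4 + α·√(4α² + 4α + 2). Set R = α(1 + |a| + √((1+|a|)² + 4|c|)). If |c| > β(1+|a|)², then 2√(|c| - R(1+|a|)) > 1 + |a|; in particular the trapping-cone inequality 2√(|c| - R(1+|a|)) - |a| > 1 holds. -/
import Mathlib


/-- Key inequality for Hénon horseshoes: if `α > 1/2`,
`β ≥ 2α² + α + 1/4 + α√(4α² + 4α + 2)`, `R = α(1 + |a| + √((1+|a|)² + 4|c|))`, and
`|c| > β(1+|a|)²`, then `2√(|c| - R(1+|a|)) > 1 + |a|`; in particular the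
trapping-cone inequality `2√(|c| - R(1+|a|)) - |a| > 1` holds. -/
theorem stmt13
    (a c : ℂ) (α β R : ℝ)
    (hα : 1 / 2 < α)
    (hβ : β ≥ 2 * α ^ 2 + α + 1 / 4 + α * Real.sqrt (4 * α ^ 2 + 4 * α + 2))
    (hRdef : R = α * (1 + ‖a‖ + Real.sqrt ((1 + ‖a‖) ^ 2 + 4 * ‖c‖)))
    (hc : ‖c‖ > β * (1 + ‖a‖) ^ 2) :
    2 * Real.sqrt (‖c‖ - R * (1 + ‖a‖)) > 1 + ‖a‖ ∧
    2 * Real.sqrt (‖c‖ - R * (1 + ‖a‖)) - ‖a‖ > 1 := by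
  have ha0 : (0:ℝ) ≤ ‖a‖ := norm_nonneg a
  set A : ℝ := 1 + ‖a‖ with hA
  set s := Real.sqrt (A ^ 2 + 4 * ‖c‖) with hs
  set u := Real.sqrt (4 * α ^ 2 + 4 * α + 2) with hu
  have hs0 : 0 ≤ s := Real.sqrt_nonneg _
  have hs2 : s ^ 2 = A ^ 2 + 4 * ‖c‖ := Real.sq_sqrt (by positivity)
  have hu0 : 0 ≤ u := Real.sqrt_nonneg _
  have hu2 : u ^ 2 = 4 * α ^ 2 + 4 * α + 2 := Real.sq_sqrt (by positivity)
  clear_value A s u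
  have hA1 : (1:ℝ) ≤ A := by rw [hA]; linarith
  have hα0 : (0:ℝ) < α := by linarith
  have hC : ‖c‖ > (2 * α ^ 2 + α + 1 / 4 + α * u) * A ^ 2 := by
    have h := mul_le_mul_of_nonneg_right hβ (sq_nonneg A)
    linarith
  have h1 : 4 * ‖c‖ - (1 + 4 * α + 8 * α ^ 2 + 4 * α * u) * A ^ 2 > 0 := by nlinarith
  have h2 : 4 * ‖c‖ - (1 + 4 * α + 8 * α ^ 2) * A ^ 2 + 4 * α * u * A ^ 2 > 0 := by
    nlinarith [mul_nonneg (mul_nonneg hα0.le hu0) (sq_nonneg A)]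
  have hP : 0 < 4 * ‖c‖ - (1 + 4 * α) * A ^ 2 := by
    nlinarith [mul_nonneg (mul_nonneg hα0.le hu0) (sq_nonneg A), sq_nonneg (α * A)]
  have hQ0 : 0 ≤ 4 * α * A * s := by positivity
  have hid : (4 * ‖c‖ - (1 + 4 * α) * A ^ 2) ^ 2 - (4 * α * A * s) ^ 2 =
      (4 * ‖c‖ - (1 + 4 * α + 8 * α ^ 2 + 4 * α * u) * A ^ 2) *
      (4 * ‖c‖ - (1 + 4 * α + 8 * α ^ 2) * A ^ 2 + 4 * α * u * A ^ 2) := by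
    linear_combination (16 * α ^ 2 * A ^ 4) * hu2 - (16 * α ^ 2 * A ^ 2) * hs2
  have hsq : (4 * α * A * s) ^ 2 < (4 * ‖c‖ - (1 + 4 * α) * A ^ 2) ^ 2 := by
    nlinarith [mul_pos h1 h2]
  have key : 4 * α * A * s < 4 * ‖c‖ - (1 + 4 * α) * A ^ 2 :=
    lt_of_pow_lt_pow_left₀ 2 hP.le hsq
  have h5 : ‖c‖ - R * A > (A / 2) ^ 2 := by
    rw [hRdef]; nlinarith [key]
  have h6 : Real.sqrt ((A / 2) ^ 2) < Real.sqrt (‖c‖ - R * A) :=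
    Real.sqrt_lt_sqrt (by positivity) h5
  rw [Real.sqrt_sq (by positivity)] at h6
  constructor <;> linarith [h6, hA1]
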